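/- Let C = Φ(𝒞) be a Z2Z4-linear code of binary length n = α+2β, where 𝒞 is a Z2Z4-additive code of type (α,β;γ,δ;κ). Then γ+2δ ≤ rank(C) ≤ min(β+δ+κ, γ+2δ+δ(δ−1)/2). -/

import Mathlib

/-- The ambient group `Z2^α × Z4^β`, with componentwise ring structure
(so `u * v` is the componentwise product). -/
abbrev Amb (α β : ℕ) := (Fin α → ZMod 2) × (Fin β → ZMod 4)

/-- The binary space `Z2^α × (Z2²)^β ≅ Z2^(α+2β)`. -/
abbrev Bin (α β : ℕ) := (Fin α → ZMod 2) × (Fin β → ZMod 2 × ZMod 2)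

/-- The Gray map `φ : Z4 → Z2²` with `φ(0)=(0,0), φ(1)=(0,1), φ(2)=(1,1), φ(3)=(1,0)`. -/
def grayPair (y : ZMod 4) : ZMod 2 × ZMod 2 :=
  match y.val with
  | 0 => (0, 0)
  | 1 => (0, 1)
  | 2 => (1, 1)
  | _ => (1, 0)

/-- The extended Gray map `Φ : Z2^α × Z4^β → Z2^(α+2β)`. -/
def Phi {α β : ℕ} (u : Amb α β) : Bin α β :=
  (u.1, fun i => grayPair (u.2 i))

/-- The kernel `K(C) = {x | x + C = C}` of a binary code. -/
def kernelK {α β : ℕ} (C : Set (Bin α β)) : Set (Bin α β) :=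
  {x | (fun y => x + y) '' C = C}

/-- The rank of a binary code: the `Z2`-dimension of its linear span. -/
noncomputable def rankOf {α β : ℕ} (C : Set (Bin α β)) : ℕ :=
  Module.finrank (ZMod 2) (Submodule.span (ZMod 2) C)

/-- The dimension of the kernel of a binary code. -/
noncomputable def kerDim {α β : ℕ} (C : Set (Bin α β)) : ℕ :=
  Module.finrank (ZMod 2) (Submodule.span (ZMod 2) (kernelK C))

/-- A `Z2Z4`-additive code `C ⊆ Z2^α × Z4^β` is of type `(α,β;γ,δ;κ)`:
`|C| = 2^(γ+2δ)`, the number of elements `x` with `2x = 0` is `2^(γ+δ)`, and `κ` is the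
`Z2`-dimension of the projection onto the first `α` coordinates of `{x ∈ C | 2x = 0}`. -/
def IsTypeOf (α β γ δ κ : ℕ) (C : AddSubgroup (Amb α β)) : Prop :=
  Nat.card C = 2 ^ (γ + 2 * δ) ∧
  Nat.card {x : Amb α β | x ∈ C ∧ 2 • x = 0} = 2 ^ (γ + δ) ∧
  Module.finrank (ZMod 2)
    (Submodule.span (ZMod 2) (Prod.fst '' {x : Amb α β | x ∈ C ∧ 2 • x = 0})) = κ

/-! ### auxiliary lemmas -/

lemma gray_add : ∀ a b : ZMod 4, grayPair a + grayPair b = grayPair (a + b + 2*(a*b)) := by decide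

lemma gray_inj : Function.Injective grayPair := by decide

lemma z2_sq : ∀ a b : ZMod 2, a + b = a + b + 2*(a*b) := by decide

lemma Phi_inj {α β : ℕ} : Function.Injective (Phi (α := α) (β := β)) := by
  intro u v h
  have h1 := congrArg Prod.fst h
  have h2 := fun i => congrFun (congrArg Prod.snd h) i
  exact Prod.ext h1 (funext fun i => gray_inj (h2 i))

lemma Phi_add {α β : ℕ} (u v : Amb α β) :
    Phi u + Phi v = Phi (u + v + 2*(u*v)) := by
  unfold Phi
  refine Prod.ext ?_ ?_
  · show u.1 + v.1 = (u + v + 2*(u*v)).1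
    have : (u + v + 2*(u*v)).1 = u.1 + v.1 + 2*(u.1*v.1) := rfl
    rw [this]; funext i
    exact z2_sq (u.1 i) (v.1 i)
  · show (fun i => grayPair (u.2 i)) + (fun i => grayPair (v.2 i))
      = fun i => grayPair ((u + v + 2*(u*v)).2 i)
    funext i
    have : (u + v + 2*(u*v)).2 i = u.2 i + v.2 i + 2*(u.2 i * v.2 i) := rfl
    rw [Pi.add_apply, this]
    exact gray_add _ _

lemma Phi_zero {α β : ℕ} : Phi (0 : Amb α β) = 0 := rfl

section Helpers
variable {G : Type*} [AddCommGroup G] [Finite G]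

lemma card_sup_le (A B : AddSubgroup G) :
    Nat.card ↥(A ⊔ B) ≤ Nat.card A * Nat.card B := by
  have hsurj : Function.Surjective
      (fun p : A × B => (⟨p.1.1 + p.2.1, AddSubgroup.add_mem_sup p.1.2 p.2.2⟩ : ↥(A ⊔ B))) := by
    rintro ⟨x, hx⟩
    rw [AddSubgroup.mem_sup] at hx
    obtain ⟨a, ha, b, hb, rfl⟩ := hx
    exact ⟨(⟨a, ha⟩, ⟨b, hb⟩), rfl⟩
  calc Nat.card ↥(A ⊔ B) ≤ Nat.card (A × B) := Nat.card_le_card_of_surjective _ hsurj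
  _ = _ := Nat.card_prod _ _

lemma card_closure_two_torsion (S : Finset G) (hS : ∀ x ∈ S, 2 • x = 0) :
    Nat.card (AddSubgroup.closure (S : Set G)) ≤ 2 ^ S.card := by
  classical
  induction S using Finset.induction_on with
  | empty => simp [AddSubgroup.closure_empty]
  | @insert a S ha ih =>
    have h1 : ((insert a S : Finset G) : Set G) = {a} ∪ (S : Set G) := by simp
    rw [h1, AddSubgroup.closure_union, Finset.card_insert_of_notMem ha, pow_succ, mul_comm]
    have h2 : Nat.card (AddSubgroup.closure ({a} : Set G)) ≤ 2 := by
      rw [← AddSubgroup.zmultiples_eq_closure, Nat.card_zmultiples]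
      exact Nat.le_of_dvd (by norm_num)
        (addOrderOf_dvd_of_nsmul_eq_zero (hS a (Finset.mem_insert_self a S)))
    calc Nat.card ↥(AddSubgroup.closure {a} ⊔ AddSubgroup.closure (S : Set G))
        ≤ _ := card_sup_le _ _
      _ ≤ 2 * 2 ^ S.card := Nat.mul_le_mul h2 (ih fun x hx => hS x (Finset.mem_insert_of_mem hx))

omit [Finite G] in
lemma card_eq_ker_mul_range {H : Type*} [AddCommGroup H] (f : G →+ H) :
    Nat.card G = Nat.card f.ker * Nat.card f.range := by
  rw [AddSubgroup.card_eq_card_quotient_mul_card_addSubgroup f.ker, mul_comm]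
  congr 1
  exact Nat.card_congr (QuotientAddGroup.quotientKerEquivRange f).toEquiv

lemma exists_gens {δ : ℕ} (T : AddSubgroup G) (hT : ∀ x ∈ T, 2 • x = 0)
    (hc : Nat.card T = 2 ^ δ) :
    ∃ v : Fin δ → G, (∀ i, v i ∈ T) ∧
      ∀ x ∈ T, ∃ n : Fin δ → ℕ, x = ∑ i, n i • v i := by
  letI : Module (ZMod 2) T := AddCommGroup.zmodModule (n := 2)
    (by rintro ⟨x, hx⟩; exact Subtype.ext (by simpa using hT x hx))
  haveI : Module.Finite (ZMod 2) ↥T := Module.Finite.of_finite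
  have hrank : Module.finrank (ZMod 2) ↥T = δ := by
    have : Fintype ↥T := Fintype.ofFinite _
    have h1 : Fintype.card ↥T = 2 ^ Module.finrank (ZMod 2) ↥T := by
      rw [Module.card_eq_pow_finrank (K := ZMod 2), ZMod.card]
    have h2 : Nat.card ↥T = Fintype.card ↥T := Nat.card_eq_fintype_card
    have h3 : (2:ℕ) ^ δ = 2 ^ Module.finrank (ZMod 2) ↥T := by rw [← hc, h2, h1]
    exact (Nat.pow_right_injective (le_refl 2) h3).symm
  let b : Module.Basis (Fin δ) (ZMod 2) ↥T := Module.finBasisOfFinrankEq (ZMod 2) ↥T hrank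
  refine ⟨fun i => (b i : G), fun i => (b i).2, fun x hx => ?_⟩
  refine ⟨fun i => (b.repr ⟨x, hx⟩ i).val, ?_⟩
  have hsum := b.sum_repr ⟨x, hx⟩
  have hzsmul : ∀ (c : ZMod 2) (t : ↥T), c • t = c.val • t := fun c t => rfl
  have h3 : (⟨x, hx⟩ : ↥T) = ∑ i, (b.repr ⟨x, hx⟩ i).val • b i := by
    conv_lhs => rw [← hsum]
    exact Finset.sum_congr rfl fun i _ => hzsmul _ _
  have h4 := congrArg T.subtype h3
  simpa [map_sum, map_nsmul] using h4

lemma card_submodule {M : Type*} [AddCommGroup M] [Module (ZMod 2) M] [Finite M]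
    (W : Submodule (ZMod 2) M) :
    Nat.card W = 2 ^ Module.finrank (ZMod 2) W := by
  have : Fintype W := Fintype.ofFinite _
  rw [Nat.card_eq_fintype_card, Module.card_eq_pow_finrank (K := ZMod 2), ZMod.card]

end Helpers

/-! ### componentwise facts about `Amb` -/

section Amb
variable {α β : ℕ}

lemma amb_two_mul_eq_smul (x : Amb α β) : (2 : Amb α β) * x = (2:ℕ) • x := by
  rw [two_mul, two_smul]

lemma amb_four (x : Amb α β) : (2:ℕ) • ((2:ℕ) • x) = 0 := by
  refine Prod.ext ?_ ?_
  · funext i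
    simp only [Prod.smul_fst, Pi.smul_apply, Prod.fst_zero, Pi.zero_apply]
    exact (by decide : ∀ a : ZMod 2, (2:ℕ) • ((2:ℕ) • a) = 0) _
  · funext i
    simp only [Prod.smul_snd, Pi.smul_apply, Prod.snd_zero, Pi.zero_apply]
    exact (by decide : ∀ a : ZMod 4, (2:ℕ) • ((2:ℕ) • a) = 0) _

lemma amb_sq (x : Amb α β) : (2:ℕ) • (x * x) = (2:ℕ) • x := by
  refine Prod.ext ?_ ?_
  · funext i
    simp only [Prod.smul_fst, Prod.fst_mul, Pi.smul_apply, Pi.mul_apply]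
    exact (by decide : ∀ a : ZMod 2, (2:ℕ) • (a * a) = (2:ℕ) • a) _
  · funext i
    simp only [Prod.smul_snd, Prod.snd_mul, Pi.smul_apply, Pi.mul_apply]
    exact (by decide : ∀ a : ZMod 4, (2:ℕ) • (a * a) = (2:ℕ) • a) _

lemma tor_mul {x : Amb α β} (y : Amb α β) (hx : (2:ℕ) • x = 0) : (2:ℕ) • (x * y) = 0 := by
  rw [← smul_mul_assoc, hx, zero_mul]

lemma expand_tor {x y t t' : Amb α β} (ht : (2:ℕ) • t = 0) (ht' : (2:ℕ) • t' = 0) :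
    (2:ℕ) • ((x + t) * (y + t')) = (2:ℕ) • (x * y) := by
  have h1 : (2:ℕ) • (t * (y + t')) = 0 := tor_mul _ ht
  have h2 : (2:ℕ) • (t' * x) = 0 := tor_mul _ ht'
  calc (2:ℕ) • ((x + t) * (y + t'))
      = (2:ℕ) • (x * (y + t')) + (2:ℕ) • (t * (y + t')) := by rw [add_mul, smul_add]
    _ = (2:ℕ) • (x * y) + (2:ℕ) • (x * t') := by rw [h1, add_zero, mul_add, smul_add]
    _ = (2:ℕ) • (x * y) := by rw [mul_comm x t', h2, add_zero]

lemma two_smul_sum_mul {δ : ℕ} (u : Fin δ → Amb α β) (n m : Fin δ → ℕ) :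
    (2:ℕ) • ((∑ i, n i • u i) * (∑ j, m j • u j))
      = ∑ i, ∑ j, (n i * m j) • ((2:ℕ) • (u i * u j)) := by
  rw [Finset.sum_mul_sum, Finset.smul_sum]
  refine Finset.sum_congr rfl fun i _ => ?_
  rw [Finset.smul_sum]
  refine Finset.sum_congr rfl fun j _ => ?_
  rw [smul_mul_smul_comm, smul_comm]

end Amb


/-- bounds on the rank of a `Z2Z4`-linear code of type `(α,β;γ,δ;κ)`. -/
theorem rank_bounds (α β γ δ κ : ℕ) (C : AddSubgroup (Amb α β))
    (h : IsTypeOf α β γ δ κ C) :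
    γ + 2 * δ ≤ rankOf (Phi '' (C : Set (Amb α β))) ∧
      rankOf (Phi '' (C : Set (Amb α β))) ≤
        min (β + δ + κ) (γ + 2 * δ + δ * (δ - 1) / 2) := by
  classical
  obtain ⟨hcard, hker, hkappa⟩ := h
  set r := rankOf (Phi '' (C : Set (Amb α β))) with hr
  have hspan_card :
      Nat.card (Submodule.span (ZMod 2) (Phi '' (C : Set (Amb α β)))) = 2 ^ r :=
    card_submodule _
  -- ### lower bound
  have hlow : γ + 2 * δ ≤ r := by
    have h1 : Nat.card ↥(Phi '' (C : Set (Amb α β))) = 2 ^ (γ + 2 * δ) := by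
      rw [Nat.card_image_of_injective Phi_inj]; exact hcard
    have h2 : (2:ℕ) ^ (γ + 2 * δ) ≤ 2 ^ r := by
      rw [← h1, ← hspan_card]
      exact Nat.card_mono (Set.toFinite _) Submodule.subset_span
    exact (Nat.pow_le_pow_iff_right (by norm_num)).1 h2
  -- ### the doubling homomorphism and `T = 2C`
  let dbl : Amb α β →+ Amb α β := AddMonoidHom.mk' (fun x => (2:ℕ) • x) (fun a b => smul_add 2 a b)
  let T : AddSubgroup (Amb α β) := C.map dbl
  have hTtor : ∀ x ∈ T, (2:ℕ) • x = 0 := by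
    rintro x hx
    obtain ⟨c, _, rfl⟩ := AddSubgroup.mem_map.1 hx
    exact amb_four c
  have hTcard : Nat.card T = 2 ^ δ := by
    have hco := card_eq_ker_mul_range (dbl.comp C.subtype)
    have hker' : Nat.card (dbl.comp C.subtype).ker = 2 ^ (γ + δ) := by
      rw [← hker]
      refine Nat.card_congr ⟨fun a => ⟨a.1.1, a.1.2, a.2⟩,
        fun b => ⟨⟨b.1, b.2.1⟩, b.2.2⟩, fun a => rfl, fun b => rfl⟩
    have hrange : (dbl.comp C.subtype).range = T := by
      ext x
      constructor
      · rintro ⟨a, rfl⟩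
        exact AddSubgroup.mem_map.2 ⟨a.1, a.2, rfl⟩
      · intro hx
        obtain ⟨c, hc, rfl⟩ := AddSubgroup.mem_map.1 hx
        exact ⟨⟨c, hc⟩, rfl⟩
    rw [hker', hrange, hcard] at hco
    have : (2:ℕ) ^ (γ + δ) * 2 ^ δ = 2 ^ (γ + δ) * Nat.card T := by
      rw [← hco, ← pow_add]; ring_nf
    exact (Nat.eq_of_mul_eq_mul_left (by positivity) this).symm
  -- generators of T and lifts
  obtain ⟨v, hvT, hvspan⟩ := exists_gens T hTtor hTcard
  have hvlift : ∀ i, ∃ c ∈ C, (2:ℕ) • c = v i := by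
    intro i
    obtain ⟨c, hc, hc2⟩ := AddSubgroup.mem_map.1 (hvT i)
    exact ⟨c, hc, hc2⟩
  choose u huC hu2 using hvlift
  -- decomposition of elements of C
  have hdec : ∀ c ∈ C, ∃ (n : Fin δ → ℕ) (t : Amb α β),
      t ∈ C ∧ (2:ℕ) • t = 0 ∧ c = (∑ i, n i • u i) + t := by
    intro c hc
    have h2c : (2:ℕ) • c ∈ T := AddSubgroup.mem_map.2 ⟨c, hc, rfl⟩
    obtain ⟨n, hn⟩ := hvspan _ h2c
    have hsum : (∑ i, n i • u i) ∈ C :=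
      AddSubgroup.sum_mem _ fun i _ => AddSubgroup.nsmul_mem _ (huC i) _
    refine ⟨n, c - ∑ i, n i • u i, AddSubgroup.sub_mem _ hc hsum, ?_, by abel⟩
    have : (2:ℕ) • (∑ i, n i • u i) = (2:ℕ) • c := by
      rw [Finset.smul_sum]
      rw [hn]
      exact Finset.sum_congr rfl fun i _ => by rw [smul_comm, hu2]
    rw [smul_sub, this, sub_self]
  -- the auxiliary subgroup E
  let f2 : Sym2 (Fin δ) → Amb α β :=
    Sym2.lift ⟨fun i j => (2:ℕ) • (u i * u j), fun i j => by
      show (2:ℕ) • (u i * u j) = (2:ℕ) • (u j * u i)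
      rw [mul_comm (u i) (u j)]⟩
  let genE : Finset (Amb α β) :=
    ((Finset.univ : Finset (Fin δ)).offDiag.image Sym2.mk.uncurry).image f2
  let E : AddSubgroup (Amb α β) := AddSubgroup.closure (genE : Set (Amb α β))
  have hgenEtor : ∀ x ∈ genE, (2:ℕ) • x = 0 := by
    intro x hx
    obtain ⟨a, ha, rfl⟩ := Finset.mem_image.1 hx
    obtain ⟨p, hp, rfl⟩ := Finset.mem_image.1 ha
    exact amb_four _
  have hEtor : ∀ e ∈ E, (2:ℕ) • e = 0 := by
    intro e he
    have hle : E ≤ dbl.ker := by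
      apply (AddSubgroup.closure_le _).2
      intro z hz
      exact AddMonoidHom.mem_ker.2 (hgenEtor z hz)
    exact hle he
  have hEfst : ∀ e ∈ E, e.1 = 0 := by
    intro e he
    have hle : E ≤ (AddMonoidHom.fst (Fin α → ZMod 2) (Fin β → ZMod 4)).ker := by
      apply (AddSubgroup.closure_le _).2
      intro z hz
      obtain ⟨a, ha, rfl⟩ := Finset.mem_image.1 hz
      obtain ⟨p, hp, rfl⟩ := Finset.mem_image.1 ha
      refine AddMonoidHom.mem_ker.2 ?_
      show ((2:ℕ) • (u p.1 * u p.2)).1 = 0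
      rw [Prod.smul_fst]
      funext i
      exact (by decide : ∀ a : ZMod 2, (2:ℕ) • a = 0) _
    exact hle he
  have hEcard : Nat.card E ≤ 2 ^ (δ * (δ - 1) / 2) := by
    refine le_trans (card_closure_two_torsion genE hgenEtor) (Nat.pow_le_pow_right (by norm_num) ?_)
    calc genE.card ≤ ((Finset.univ : Finset (Fin δ)).offDiag.image Sym2.mk.uncurry).card :=
          Finset.card_image_le
      _ = δ * (δ - 1) / 2 := by
          rw [Sym2.card_image_offDiag, Finset.card_univ, Fintype.card_fin, Nat.choose_two_right]
  -- key membership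
  have key : ∀ c ∈ C, ∀ c' ∈ C, (2:ℕ) • (c * c') ∈ C ⊔ E := by
    intro c hc c' hc'
    obtain ⟨n, t, htC, ht2, rfl⟩ := hdec c hc
    obtain ⟨m, t', ht'C, ht'2, rfl⟩ := hdec c' hc'
    rw [expand_tor ht2 ht'2, two_smul_sum_mul]
    refine AddSubgroup.sum_mem _ fun i _ => AddSubgroup.sum_mem _ fun j _ =>
      AddSubgroup.nsmul_mem _ ?_ _
    by_cases hij : i = j
    · subst hij
      rw [amb_sq]
      exact AddSubgroup.mem_sup_left (AddSubgroup.nsmul_mem _ (huC i) 2)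
    · refine AddSubgroup.mem_sup_right (AddSubgroup.subset_closure ?_)
      refine Finset.mem_coe.2 (Finset.mem_image.2 ⟨Sym2.mk i j,
        Finset.mem_image_of_mem (Function.uncurry Sym2.mk) (a := (i, j)) (Finset.mem_offDiag.2 ⟨Finset.mem_univ _, Finset.mem_univ _, hij⟩),
        rfl⟩)
  -- the subgroup S = C ⊔ E
  set S : AddSubgroup (Amb α β) := C ⊔ E with hSdef
  have hS2 : ∀ s ∈ S, ∀ s' ∈ S, (2:ℕ) • (s * s') ∈ S := by
    intro s hs s' hs'
    rw [hSdef, AddSubgroup.mem_sup] at hs hs'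
    obtain ⟨c, hc, e, he, rfl⟩ := hs
    obtain ⟨c', hc', e', he', rfl⟩ := hs'
    rw [expand_tor (hEtor e he) (hEtor e' he')]
    exact key c hc c' hc'
  -- Phi '' S is a submodule
  let PS : Submodule (ZMod 2) (Bin α β) :=
    { carrier := Phi '' (S : Set (Amb α β))
      add_mem' := by
        rintro x y ⟨s, hs, rfl⟩ ⟨s', hs', rfl⟩
        refine ⟨s + s' + 2*(s*s'), ?_, (Phi_add s s').symm⟩
        refine S.add_mem (S.add_mem hs hs') ?_
        rw [amb_two_mul_eq_smul]
        exact hS2 s hs s' hs'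
      zero_mem' := ⟨0, S.zero_mem, Phi_zero⟩
      smul_mem' := by
        rintro k x ⟨s, hs, rfl⟩
        rcases (by decide : ∀ k : ZMod 2, k = 0 ∨ k = 1) k with hk | hk <;> subst hk
        · exact ⟨0, S.zero_mem, by rw [zero_smul]; exact Phi_zero.symm⟩
        · rw [one_smul]; exact ⟨s, hs, rfl⟩ }
  have hspan_le : Submodule.span (ZMod 2) (Phi '' (C : Set (Amb α β))) ≤ PS :=
    Submodule.span_le.2 (Set.image_mono (SetLike.coe_subset_coe.2 le_sup_left))
  have hrank_le_cardS : (2:ℕ) ^ r ≤ Nat.card S := by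
    have h1 : Nat.card ↥(Phi '' (S : Set (Amb α β))) = Nat.card S :=
      Nat.card_image_of_injective Phi_inj _
    rw [← hspan_card, ← h1]
    exact Nat.card_mono (Set.toFinite _) hspan_le
  -- bound 2 : |S| ≤ 2^(γ+2δ+δ(δ-1)/2)
  have hbound2 : r ≤ γ + 2 * δ + δ * (δ - 1) / 2 := by
    have h1 : Nat.card S ≤ 2 ^ (γ + 2 * δ + δ * (δ - 1) / 2) := by
      calc Nat.card S ≤ Nat.card C * Nat.card E := card_sup_le _ _
        _ ≤ 2 ^ (γ + 2 * δ) * 2 ^ (δ * (δ - 1) / 2) := by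
            rw [hcard]; exact Nat.mul_le_mul_left _ hEcard
        _ = 2 ^ (γ + 2 * δ + δ * (δ - 1) / 2) := (pow_add 2 _ _).symm
    exact (Nat.pow_le_pow_iff_right (by norm_num)).1 (le_trans hrank_le_cardS h1)
  -- bound 1 : |S| ≤ 2^(β+δ+κ)
  have hbound1 : r ≤ β + δ + κ := by
    set fS := dbl.comp S.subtype with hfS
    have hcS := card_eq_ker_mul_range fS
    -- range bound
    have hrange : fS.range ≤ T := by
      rintro x ⟨a, rfl⟩
      have ha : (a : Amb α β) ∈ C ⊔ E := a.2
      rw [AddSubgroup.mem_sup] at ha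
      obtain ⟨c, hc, e, he, hce⟩ := ha
      show (2:ℕ) • (a : Amb α β) ∈ T
      rw [← hce, smul_add, hEtor e he, add_zero]
      exact AddSubgroup.mem_map.2 ⟨c, hc, rfl⟩
    have hrange_card : Nat.card fS.range ≤ 2 ^ δ := by
      rw [← hTcard]
      exact AddSubgroup.card_le_of_le hrange
    -- kernel bound
    set W := Submodule.span (ZMod 2) (Prod.fst '' {x : Amb α β | x ∈ C ∧ 2 • x = 0}) with hW
    have hker_card : Nat.card fS.ker ≤ 2 ^ κ * 2 ^ β := by
      have hWcard : Nat.card W = 2 ^ κ := by rw [card_submodule, hkappa]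
      have hYcard : Nat.card {y : Fin β → ZMod 4 // ∀ i, (2:ℕ) • y i = 0} = 2 ^ β := by
        rw [Nat.card_congr (Equiv.subtypePiEquivPi (p := fun _ (b : ZMod 4) => (2:ℕ) • b = 0)),
          Nat.card_pi]
        have hone : ∀ _i : Fin β, Nat.card {b : ZMod 4 // (2:ℕ) • b = 0} = 2 := fun _ => by
          rw [Nat.card_eq_fintype_card]; decide
        rw [Finset.prod_congr rfl (fun i _ => hone i), Finset.prod_const, Finset.card_univ,
          Fintype.card_fin]
      -- injection
      have hinj : ∃ g : ↥fS.ker → ↥W × {y : Fin β → ZMod 4 // ∀ i, (2:ℕ) • y i = 0},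
          Function.Injective g := by
        have hmemW : ∀ a : ↥fS.ker, ((a : ↥S) : Amb α β).1 ∈ W := by
          intro a
          have haS : ((a : ↥S) : Amb α β) ∈ C ⊔ E := (a : ↥S).2
          rw [AddSubgroup.mem_sup] at haS
          obtain ⟨c, hc, e, he, hce⟩ := haS
          have ha2 : (2:ℕ) • ((a : ↥S) : Amb α β) = 0 := a.2
          have hc2 : (2:ℕ) • c = 0 := by
            have := ha2
            rw [← hce, smul_add, hEtor e he, add_zero] at this
            exact this
          have hfst : ((a : ↥S) : Amb α β).1 = c.1 := by
            rw [← hce]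
            show c.1 + e.1 = c.1
            rw [hEfst e he, add_zero]
          rw [hfst]
          exact Submodule.subset_span ⟨c, ⟨hc, hc2⟩, rfl⟩
        have hmemY : ∀ a : ↥fS.ker, ∀ i, (2:ℕ) • ((a : ↥S) : Amb α β).2 i = 0 := by
          intro a i
          have ha2 : (2:ℕ) • ((a : ↥S) : Amb α β) = 0 := a.2
          have := congrFun (congrArg Prod.snd ha2) i
          simpa using this
        refine ⟨fun a => (⟨((a : ↥S) : Amb α β).1, hmemW a⟩, ⟨((a : ↥S) : Amb α β).2, hmemY a⟩), ?_⟩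
        intro a b hab
        have h1 := congrArg (fun p => (p.1 : Fin α → ZMod 2)) hab
        have h2 := congrArg (fun p => (p.2 : Fin β → ZMod 4)) hab
        exact Subtype.ext (Subtype.ext (Prod.ext h1 h2))
      obtain ⟨g, hg⟩ := hinj
      calc Nat.card fS.ker
          ≤ Nat.card (↥W × {y : Fin β → ZMod 4 // ∀ i, (2:ℕ) • y i = 0}) :=
            Nat.card_le_card_of_injective g hg
        _ = 2 ^ κ * 2 ^ β := by rw [Nat.card_prod, hWcard, hYcard]
    have h1 : Nat.card S ≤ 2 ^ (β + δ + κ) := by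
      calc Nat.card S = Nat.card fS.ker * Nat.card fS.range := hcS
        _ ≤ (2 ^ κ * 2 ^ β) * 2 ^ δ := Nat.mul_le_mul hker_card hrange_card
        _ = 2 ^ (β + δ + κ) := by rw [← pow_add, ← pow_add]; ring_nf
    exact (Nat.pow_le_pow_iff_right (by norm_num)).1 (le_trans hrank_le_cardS h1)
  exact ⟨hlow, le_min hbound1 hbound2⟩
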